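/- Fix reals ρ > 0 and 0 < δ ≤ 2. Let A(Δ_{n,r}, d) be the maximum cardinality of a subset C ⊆ Δ_{n,r} such that D(c₁,c₂) ≥ d for all distinct c₁, c₂ ∈ C. Then limsup_{n→∞} (1/n)·log₂ A(Δ_{n,⌊ρn⌋}, ⌊δn⌋) ≤ (1 + δ/2 + ρ)·H(ρ/(1 + δ/2 + ρ)) − (δ/2 + ρ)·H(ρ/(δ/2 + ρ)). -/

import Mathlib

/-- The binary entropy function (base-2 logarithms). -/
noncomputable def binH (p : ℝ) : ℝ := -p * Real.logb 2 p - (1 - p) * Real.logb 2 (1 - p)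

/-- `simplexCodeMax n r d = A(Δ_{n,r}, d)`: the maximum cardinality of a subset `C` of the
standard simplex `Δ_{n,r}` with pairwise L1-distance at least `d`. -/
noncomputable def simplexCodeMax (n r d : ℕ) : ℕ :=
  sSup {m : ℕ | ∃ C : Finset (Fin r → ℤ),
    (∀ u ∈ C, (∀ i, 0 ≤ u i) ∧ (∑ i, u i) = (n : ℤ)) ∧
    (∀ u ∈ C, ∀ v ∈ C, u ≠ v → (d : ℤ) ≤ ∑ i, |u i - v i|) ∧
    C.card = m}


open Finset

lemma antidiagonalTuple_length (k : ℕ) :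
    ∀ n, (List.Nat.antidiagonalTuple (k+1) n).length = (n+k).choose k := by
  induction k with
  | zero => intro n; simp [List.Nat.antidiagonalTuple_one]
  | succ k ih =>
    intro n
    rw [show k+1+1 = (k+1)+1 from rfl, List.Nat.antidiagonalTuple, List.length_flatMap,
      List.Nat.antidiagonal, List.map_map]
    rw [List.map_congr_left (g := fun i => (n - i + k).choose k)
      (fun i _ => by simp [Function.comp, ih])]
    have h2 : ((List.range (n+1)).map (fun i => (n - i + k).choose k)).sum
        = ∑ i ∈ Finset.range (n+1), (n - i + k).choose k := rfl
    have h5 : ∑ i ∈ Finset.range (n+1), (n - i + k).choose k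
        = ∑ i ∈ Finset.range (n+1), ((n + 1 - 1 - i) + k).choose k :=
      Finset.sum_congr rfl (fun i hi => rfl)
    rw [h2, h5, Finset.sum_range_reflect (fun j => (j+k).choose k) (n+1)]
    have h4 : ∑ j ∈ Finset.range (n+1), (j+k).choose k
        = ∑ m ∈ Finset.Icc k (n+k), m.choose k := by
      rw [← Finset.Ico_add_one_right_eq_Icc, Finset.sum_Ico_eq_sum_range]
      apply Finset.sum_congr (by congr 1; omega)
      intro j _; congr 1; omega
    rw [h4, Nat.sum_Icc_choose]
    rfl

lemma card_antidiagonalTuple (k n : ℕ) :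
    (Finset.Nat.antidiagonalTuple (k+1) n).card = (n+k).choose k := by
  show (Multiset.Nat.antidiagonalTuple (k+1) n).card = _
  show (List.Nat.antidiagonalTuple (k+1) n).length = _
  exact antidiagonalTuple_length k n

def zsimplex (r m : ℕ) : Finset (Fin r → ℤ) :=
  (Finset.Nat.antidiagonalTuple r m).map
    ⟨fun f i => (f i : ℤ), fun f g h => funext fun i => by
      have h2 : ((f i : ℤ)) = (g i : ℤ) := congrFun h i
      exact_mod_cast h2⟩

lemma mem_zsimplex {r m : ℕ} {u : Fin r → ℤ} :
    u ∈ zsimplex r m ↔ (∀ i, 0 ≤ u i) ∧ (∑ i, u i) = (m : ℤ) := by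
  constructor
  · rintro hu
    rw [zsimplex, Finset.mem_map] at hu
    obtain ⟨f, hf, rfl⟩ := hu
    rw [Finset.Nat.mem_antidiagonalTuple] at hf
    refine ⟨fun i => Int.natCast_nonneg _, ?_⟩
    push_cast [← hf]
    rfl
  · rintro ⟨h0, hs⟩
    rw [zsimplex, Finset.mem_map]
    refine ⟨fun i => (u i).toNat, ?_, funext fun i => Int.toNat_of_nonneg (h0 i)⟩
    rw [Finset.Nat.mem_antidiagonalTuple]
    have : ((∑ i, (u i).toNat : ℕ) : ℤ) = (m : ℤ) := by
      push_cast
      rw [← hs]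
      exact Finset.sum_congr rfl fun i _ => Int.toNat_of_nonneg (h0 i)
    exact_mod_cast this

lemma packing {n r d t : ℕ} (ht : 2*t < d) (C : Finset (Fin r → ℤ))
    (hC1 : ∀ u ∈ C, (∀ i, 0 ≤ u i) ∧ (∑ i, u i) = (n : ℤ))
    (hC2 : ∀ u ∈ C, ∀ v ∈ C, u ≠ v → (d:ℤ) ≤ ∑ i, |u i - v i|) :
    C.card * (zsimplex r t).card ≤ (zsimplex r (n+t)).card := by
  rw [← Finset.card_product]
  apply Finset.card_le_card_of_injOn (fun p => p.1 + p.2)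
  · rintro ⟨c, e⟩ hp
    dsimp only
    simp only [Finset.mem_coe, Finset.mem_product] at hp ⊢
    obtain ⟨hc, he⟩ := hp
    obtain ⟨hc0, hcs⟩ := hC1 c hc
    obtain ⟨he0, hes⟩ := mem_zsimplex.mp he
    rw [mem_zsimplex]
    refine ⟨fun i => by have := hc0 i; have := he0 i; simp only [Pi.add_apply]; omega, ?_⟩
    simp only [Pi.add_apply]
    rw [Finset.sum_add_distrib, hcs, hes]
    push_cast
    ring
  · rintro ⟨c, e⟩ hp ⟨c', e'⟩ hq h
    simp only [Finset.coe_product, Set.mem_prod, Finset.mem_coe] at hp hq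
    simp only at h
    obtain ⟨hc, he⟩ := hp
    obtain ⟨hc', he'⟩ := hq
    obtain ⟨he0, hes⟩ := mem_zsimplex.mp he
    obtain ⟨he0', hes'⟩ := mem_zsimplex.mp he'
    by_cases hcc : c = c'
    · subst hcc
      have : e = e' := by
        funext i
        have := congrFun h i
        simp only [Pi.add_apply] at this
        omega
      rw [this]
    · exfalso
      have hd := hC2 c hc c' hc' hcc
      have hkey : ∀ i, |c i - c' i| ≤ e' i + e i := by
        intro i
        have := congrFun h i
        simp only [Pi.add_apply] at this
        have := he0 i; have := he0' i
        rw [abs_le]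
        omega
      have : (d:ℤ) ≤ ∑ i, (e' i + e i) := le_trans hd (Finset.sum_le_sum fun i _ => hkey i)
      rw [Finset.sum_add_distrib, hes, hes'] at this
      have h2 : (d:ℤ) ≤ 2*t := by omega
      omega

lemma codeSet_bddAbove (n r d : ℕ) : BddAbove {m : ℕ | ∃ C : Finset (Fin r → ℤ),
    (∀ u ∈ C, (∀ i, 0 ≤ u i) ∧ (∑ i, u i) = (n : ℤ)) ∧
    (∀ u ∈ C, ∀ v ∈ C, u ≠ v → (d : ℤ) ≤ ∑ i, |u i - v i|) ∧
    C.card = m} := by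
  refine ⟨(zsimplex r n).card, ?_⟩
  rintro m ⟨C, hC1, -, rfl⟩
  exact Finset.card_le_card fun u hu => mem_zsimplex.mpr (hC1 u hu)

lemma codeSet_nonempty (n r d : ℕ) : Set.Nonempty {m : ℕ | ∃ C : Finset (Fin r → ℤ),
    (∀ u ∈ C, (∀ i, 0 ≤ u i) ∧ (∑ i, u i) = (n : ℤ)) ∧
    (∀ u ∈ C, ∀ v ∈ C, u ≠ v → (d : ℤ) ≤ ∑ i, |u i - v i|) ∧
    C.card = m} :=
  ⟨0, ∅, by simp, by simp, rfl⟩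

lemma simplexCodeMax_mul_le {n r d t : ℕ} (ht : 2*t < d) :
    simplexCodeMax n r d * (zsimplex r t).card ≤ (zsimplex r (n+t)).card := by
  have hmem := Nat.sSup_mem (codeSet_nonempty n r d) (codeSet_bddAbove n r d)
  obtain ⟨C, hC1, hC2, hcard⟩ := hmem
  rw [simplexCodeMax, ← hcard]
  exact packing ht C hC1 hC2

lemma one_le_simplexCodeMax {n r d : ℕ} (hr : 0 < r) : 1 ≤ simplexCodeMax n r d := by
  have h1 : (1 : ℕ) ∈ {m : ℕ | ∃ C : Finset (Fin r → ℤ),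
      (∀ u ∈ C, (∀ i, 0 ≤ u i) ∧ (∑ i, u i) = (n : ℤ)) ∧
      (∀ u ∈ C, ∀ v ∈ C, u ≠ v → (d : ℤ) ≤ ∑ i, |u i - v i|) ∧
      C.card = m} := by
    refine ⟨{fun i => if i = (⟨0, hr⟩ : Fin r) then (n:ℤ) else 0}, ?_, ?_, rfl⟩
    · intro u hu
      rw [Finset.mem_singleton] at hu
      subst hu
      constructor
      · intro i; dsimp only; split <;> simp
      · simp
    · intro u hu v hv huv
      rw [Finset.mem_singleton] at hu hv
      exact absurd (hu.trans hv.symm) huv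
  exact le_csSup (codeSet_bddAbove n r d) h1

open Finset

lemma choose_mul_le {N k : ℕ} (h : k ≤ N) :
    N.choose k * k^k * (N-k)^(N-k) ≤ N^N := by
  have hp := add_pow k (N-k) N
  rw [Nat.add_sub_cancel' h] at hp
  simp only [Nat.cast_id] at hp
  rw [hp]
  have hk : k ∈ Finset.range (N+1) := by simp; omega
  calc N.choose k * k^k * (N-k)^(N-k) = k^k * (N-k)^(N-k) * N.choose k := by ring
    _ ≤ _ := Finset.single_le_sum (f := fun j => k^j * (N-k)^(N-j) * N.choose j)
        (fun j _ => Nat.zero_le _) hk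

lemma pow_le_succ_mul_choose {M k : ℕ} (h0 : 0 < k) (h1 : k < M) :
    M^M ≤ (M+1) * (M.choose k * k^k * (M-k)^(M-k)) := by
  set T : ℕ → ℕ := fun j => M.choose j * k^j * (M-k)^(M-j) with hT
  have hstep : ∀ j, j < M → T j * ((M-j)*k) = T (j+1) * ((j+1)*(M-k)) := by
    intro j hj
    have hc := Nat.choose_succ_right_eq M j
    obtain ⟨a, ha⟩ : ∃ a, M - j = a + 1 := ⟨M - (j+1), by omega⟩
    have ha2 : M - (j+1) = a := by omega
    simp only [hT]
    rw [ha] at hc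
    rw [ha2, ha]
    calc M.choose j * k^j * (M-k)^(a+1) * ((a+1)*k)
        = (M.choose j * (a+1)) * (k^(j+1) * (M-k)^(a+1)) := by ring
      _ = (M.choose (j+1) * (j+1)) * (k^(j+1) * (M-k)^(a+1)) := by rw [← hc]
      _ = M.choose (j+1) * k^(j+1) * (M-k)^a * ((j+1)*(M-k)) := by ring
  have hup : ∀ j, j < k → T j ≤ T (j+1) := by
    intro j hj
    have hjM : j < M := lt_trans hj h1
    have hineq : (j+1)*(M-k) ≤ (M-j)*k := by
      calc (j+1)*(M-k) ≤ k*(M-j) := Nat.mul_le_mul hj (Nat.sub_le_sub_left (le_of_lt hj) M)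
        _ = (M-j)*k := Nat.mul_comm _ _
    have hpos : 0 < (M-j)*k := Nat.mul_pos (by omega) h0
    have := hstep j hjM
    have h2 : T j * ((M-j)*k) ≤ T (j+1) * ((M-j)*k) := by
      rw [this]
      exact Nat.mul_le_mul_left _ hineq
    exact Nat.le_of_mul_le_mul_right h2 hpos
  have hdown : ∀ j, k ≤ j → T (j+1) ≤ T j := by
    intro j hj
    by_cases hjM : j < M
    · have hineq : (M-j)*k ≤ (j+1)*(M-k) := by
        calc (M-j)*k ≤ (M-k)*(j+1) :=
          Nat.mul_le_mul (Nat.sub_le_sub_left hj M) (by omega)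
        _ = (j+1)*(M-k) := Nat.mul_comm _ _
      have hpos : 0 < (j+1)*(M-k) := Nat.mul_pos (by omega) (by omega)
      have h2 : T (j+1) * ((j+1)*(M-k)) ≤ T j * ((j+1)*(M-k)) := by
        rw [← hstep j hjM]
        exact Nat.mul_le_mul_left _ hineq
      exact Nat.le_of_mul_le_mul_right h2 hpos
    · have hz : M.choose (j+1) = 0 := Nat.choose_eq_zero_of_lt (by omega)
      simp [hT, hz]
  have hle : ∀ j ∈ Finset.range (M+1), T j ≤ T k := by
    intro j hj
    rcases le_or_gt j k with h | h
    · have key : ∀ m, m ≤ k → T (k - m) ≤ T k := by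
        intro m
        induction m with
        | zero => simp
        | succ m ihm =>
          intro hm
          have h1' : k - (m+1) < k := by omega
          have hx : T (k-(m+1)) ≤ T (k-(m+1)+1) := hup _ h1'
          rw [show k-(m+1)+1 = k-m by omega] at hx
          exact hx.trans (ihm (by omega))
      have := key (k - j) (by omega)
      rwa [show k - (k - j) = j by omega] at this
    · have key : ∀ m, T (k + m) ≤ T k := by
        intro m
        induction m with
        | zero => simp
        | succ m ihm =>
          refine le_trans ?_ ihm
          rw [show k+(m+1) = (k+m)+1 by ring]
          exact hdown (k+m) (by omega)
      have := key (j - k)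
      rwa [show k + (j-k) = j by omega] at this
  have hsum : ∑ j ∈ Finset.range (M+1), T j = M^M := by
    have hp := add_pow k (M-k) M
    rw [Nat.add_sub_cancel' (le_of_lt h1)] at hp
    rw [hp]
    apply Finset.sum_congr rfl
    intro j _
    simp only [hT, Nat.cast_id]
    ring
  calc M^M = ∑ j ∈ Finset.range (M+1), T j := hsum.symm
    _ ≤ (M+1) * T k := by
        have := Finset.sum_le_card_nsmul (Finset.range (M+1)) T (T k) hle
        simpa [Finset.card_range, smul_eq_mul] using this


lemma card_zsimplex (r m : ℕ) : (zsimplex r m).card = (Finset.Nat.antidiagonalTuple r m).card :=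
  Finset.card_map _

lemma codeMax_choose {n k d t : ℕ} (ht : 2*t < d) :
    simplexCodeMax n (k+1) d * ((t+k).choose k) ≤ ((n+t+k).choose k) := by
  have hmain := simplexCodeMax_mul_le (n := n) (r := k+1) (d := d) (t := t) ht
  rwa [card_zsimplex, card_zsimplex, card_antidiagonalTuple, card_antidiagonalTuple] at hmain


lemma binH_mul_eq {k N : ℝ} (h0 : 0 < k) (h1 : k < N) :
    N * binH (k / N) = N * Real.logb 2 N - k * Real.logb 2 k - (N - k) * Real.logb 2 (N - k) := by
  have hN : 0 < N := h0.trans h1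
  have h2 : (1 : ℝ) - k / N = (N - k)/N := by field_simp
  rw [binH, h2, Real.logb_div (ne_of_gt h0) (ne_of_gt hN),
    Real.logb_div (by linarith) (ne_of_gt hN)]
  field_simp
  ring

lemma logb_choose_le {N k : ℕ} (h0 : 0 < k) (h1 : k < N) :
    Real.logb 2 (N.choose k) ≤ (N : ℝ) * binH (k / N) := by
  have hkN : ((N - k : ℕ) : ℝ) = (N : ℝ) - k := by
    push_cast [Nat.cast_sub h1.le]; ring
  have hnat := choose_mul_le h1.le
  have hreal : (N.choose k : ℝ) * (k:ℝ)^(k:ℕ) * ((N:ℝ)-(k:ℝ))^(N-k : ℕ) ≤ (N:ℝ)^(N:ℕ) := by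
    rw [← hkN]
    exact_mod_cast hnat
  have hCpos : (0:ℝ) < (N.choose k : ℝ) := by exact_mod_cast Nat.choose_pos h1.le
  have hkpos : (0:ℝ) < (k:ℝ) := by exact_mod_cast h0
  have hNk : (0:ℝ) < (N:ℝ) - (k:ℝ) := by
    have : (k:ℝ) < (N:ℝ) := by exact_mod_cast h1
    linarith
  have hNpos : (0:ℝ) < (N:ℝ) := by exact_mod_cast h0.trans h1
  have hlog := Real.logb_le_logb_of_le (b := 2) one_lt_two
    (mul_pos (mul_pos hCpos (pow_pos hkpos _)) (pow_pos hNk _)) hreal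
  rw [Real.logb_mul (by positivity) (ne_of_gt (pow_pos hNk _)),
      Real.logb_mul (ne_of_gt hCpos) (ne_of_gt (pow_pos hkpos _)),
      Real.logb_pow, Real.logb_pow, Real.logb_pow, hkN] at hlog
  rw [binH_mul_eq hkpos (by exact_mod_cast h1)]
  linarith

lemma le_logb_choose {M k : ℕ} (h0 : 0 < k) (h1 : k < M) :
    (M : ℝ) * binH (k / M) - Real.logb 2 ((M:ℝ)+1) ≤ Real.logb 2 (M.choose k) := by
  have hkM : ((M - k : ℕ) : ℝ) = (M : ℝ) - k := by
    push_cast [Nat.cast_sub h1.le]; ring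
  have hnat := pow_le_succ_mul_choose h0 h1
  have hreal : (M:ℝ)^(M:ℕ) ≤ ((M:ℝ)+1) * ((M.choose k : ℝ) * (k:ℝ)^(k:ℕ) * ((M:ℝ)-(k:ℝ))^(M-k : ℕ)) := by
    rw [← hkM]
    exact_mod_cast hnat
  have hCpos : (0:ℝ) < (M.choose k : ℝ) := by exact_mod_cast Nat.choose_pos h1.le
  have hkpos : (0:ℝ) < (k:ℝ) := by exact_mod_cast h0
  have hMk : (0:ℝ) < (M:ℝ) - (k:ℝ) := by
    have : (k:ℝ) < (M:ℝ) := by exact_mod_cast h1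
    linarith
  have hMpos : (0:ℝ) < (M:ℝ) := by exact_mod_cast h0.trans h1
  have hlog := Real.logb_le_logb_of_le (b := 2) one_lt_two
    (pow_pos hMpos _) hreal
  rw [Real.logb_mul (by positivity)
        (ne_of_gt (mul_pos (mul_pos hCpos (pow_pos hkpos _)) (pow_pos hMk _))),
      Real.logb_mul (ne_of_gt (mul_pos hCpos (pow_pos hkpos _))) (ne_of_gt (pow_pos hMk _)),
      Real.logb_mul (ne_of_gt hCpos) (ne_of_gt (pow_pos hkpos _)),
      Real.logb_pow, Real.logb_pow, Real.logb_pow, hkM] at hlog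
  rw [binH_mul_eq hkpos (by exact_mod_cast h1)]
  linarith

lemma binH_continuousAt {p : ℝ} (h0 : p ≠ 0) (h1 : p ≠ 1) : ContinuousAt binH p := by
  have c1 : ContinuousAt (fun q : ℝ => Real.logb 2 q) p := Real.continuousAt_logb h0
  have c2 : ContinuousAt (fun q : ℝ => Real.logb 2 (1 - q)) p :=
    (Real.continuousAt_logb (sub_ne_zero.mpr (Ne.symm h1))).comp
      ((continuous_const.sub continuous_id).continuousAt)
  exact ((continuousAt_id.neg.mul c1).sub
    (((continuous_const.sub continuous_id).continuousAt).mul c2))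

open Filter
theorem stmt8 (ρ δ : ℝ) (hρ : 0 < ρ) (hδ0 : 0 < δ) (hδ : δ ≤ 2) :
    Filter.limsup
      (fun n : ℕ =>
        Real.logb 2 (simplexCodeMax n ⌊ρ * (n : ℝ)⌋₊ ⌊δ * (n : ℝ)⌋₊) / n)
      Filter.atTop
    ≤ (1 + δ / 2 + ρ) * binH (ρ / (1 + δ / 2 + ρ))
      - (δ / 2 + ρ) * binH (ρ / (δ / 2 + ρ)) := by
  set rr : ℕ → ℕ := fun n => ⌊ρ * (n : ℝ)⌋₊ with hrr
  set dd : ℕ → ℕ := fun n => ⌊δ * (n : ℝ)⌋₊ with hdd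
  set tt : ℕ → ℕ := fun n => (dd n - 1)/2 with htt
  set kk : ℕ → ℕ := fun n => rr n - 1 with hkk
  set Nb : ℕ → ℕ := fun n => n + tt n + kk n with hNb
  set Mb : ℕ → ℕ := fun n => tt n + kk n with hMb
  set f : ℕ → ℝ := fun n => Real.logb 2 (simplexCodeMax n (rr n) (dd n)) / n with hf
  set h : ℕ → ℝ := fun n => ((Nb n : ℝ)/n) * binH ((kk n : ℝ)/(Nb n))
      - ((Mb n : ℝ)/n) * binH ((kk n : ℝ)/(Mb n))
      + Real.logb 2 ((Mb n : ℝ)+1) / n with hh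
  set c1 : ℝ := 1 + δ / 2 + ρ with hc1
  set c2 : ℝ := δ / 2 + ρ with hc2
  have hc2pos : 0 < c2 := by rw [hc2]; positivity
  have hc1pos : 0 < c1 := by rw [hc1]; positivity
  -- eventual hypotheses
  have Err : Tendsto rr atTop atTop := tendsto_nat_floor_mul_atTop ρ hρ
  have Edd : Tendsto dd atTop atTop := tendsto_nat_floor_mul_atTop δ hδ0
  have E1 : ∀ᶠ n : ℕ in atTop, 2 ≤ rr n := Err.eventually_ge_atTop 2
  have E2 : ∀ᶠ n : ℕ in atTop, 3 ≤ dd n := Edd.eventually_ge_atTop 3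
  have E3 : ∀ᶠ n : ℕ in atTop, 1 ≤ n := eventually_ge_atTop 1
  -- Step 1 : eventual bound f ≤ h
  have hfh : ∀ᶠ n : ℕ in atTop, f n ≤ h n := by
    filter_upwards [E1, E2, E3] with n h1 h2 h3
    have hk1 : 1 ≤ kk n := by simp only [hkk]; omega
    have hr : rr n = kk n + 1 := by simp only [hkk]; omega
    have ht1 : 1 ≤ tt n := by simp only [htt]; omega
    have h2t : 2 * tt n < dd n := by simp only [htt]; omega
    have hA1 : 1 ≤ simplexCodeMax n (rr n) (dd n) := one_le_simplexCodeMax (by omega)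
    have hkey : simplexCodeMax n (rr n) (dd n) * ((tt n + kk n).choose (kk n))
        ≤ ((n + tt n + kk n).choose (kk n)) := by
      rw [hr]; exact codeMax_choose h2t
    set A := simplexCodeMax n (rr n) (dd n) with hA
    have hkM : kk n < Mb n := by simp only [hMb]; omega
    have hkN : kk n < Nb n := by simp only [hNb]; omega
    have hCM : (0:ℝ) < ((Mb n).choose (kk n) : ℝ) := by
      exact_mod_cast Nat.choose_pos (le_of_lt hkM)
    have hApos : (0:ℝ) < (A:ℝ) := by exact_mod_cast hA1
    -- logb A ≤ logb CN - logb CM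
    have hlb : Real.logb 2 (A:ℝ) ≤
        Real.logb 2 (((Nb n).choose (kk n) : ℝ)) - Real.logb 2 (((Mb n).choose (kk n) : ℝ)) := by
      have hMul : (A : ℝ) * ((Mb n).choose (kk n) : ℝ) ≤ ((Nb n).choose (kk n) : ℝ) := by
        exact_mod_cast hkey
      have := Real.logb_le_logb_of_le (b := 2) one_lt_two
        (mul_pos hApos hCM) hMul
      rw [Real.logb_mul (ne_of_gt hApos) (ne_of_gt hCM)] at this
      linarith
    have hup := logb_choose_le (N := Nb n) (k := kk n) hk1 hkN
    have hdn := le_logb_choose (M := Mb n) (k := kk n) hk1 hkM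
    have hnum : Real.logb 2 (A:ℝ) ≤ (Nb n : ℝ) * binH ((kk n : ℝ)/(Nb n))
        - (Mb n : ℝ) * binH ((kk n : ℝ)/(Mb n)) + Real.logb 2 ((Mb n : ℝ)+1) := by
      push_cast at hup hdn ⊢
      linarith
    have hnpos : (0:ℝ) < (n:ℝ) := by exact_mod_cast h3
    calc f n = Real.logb 2 (A:ℝ) / n := rfl
      _ ≤ ((Nb n : ℝ) * binH ((kk n : ℝ)/(Nb n))
            - (Mb n : ℝ) * binH ((kk n : ℝ)/(Mb n))
            + Real.logb 2 ((Mb n : ℝ)+1)) / n := by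
          exact (div_le_div_iff_of_pos_right hnpos).mpr hnum
      _ = h n := by simp only [hh]; ring
  -- Step 2 : limits
  have hcast : Tendsto (fun n : ℕ => (n : ℝ)) atTop atTop := tendsto_natCast_atTop_atTop
  have Ld : Tendsto (fun n : ℕ => (dd n : ℝ)/n) atTop (nhds δ) :=
    (tendsto_nat_floor_mul_div_atTop hδ0.le).comp hcast
  have Lr : Tendsto (fun n : ℕ => (rr n : ℝ)/n) atTop (nhds ρ) :=
    (tendsto_nat_floor_mul_div_atTop hρ.le).comp hcast
  have Linv : Tendsto (fun n : ℕ => (1:ℝ)/n) atTop (nhds 0) :=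
    tendsto_one_div_atTop_nhds_zero_nat
  have Lk : Tendsto (fun n : ℕ => (kk n : ℝ)/n) atTop (nhds ρ) := by
    apply Tendsto.congr' ?_ (by simpa using Lr.sub Linv)
    filter_upwards [E1, E3] with n h1 h3
    have hck : (kk n : ℝ) = (rr n : ℝ) - 1 := by
      simp only [hkk]
      push_cast [Nat.cast_sub (by omega : 1 ≤ rr n)]
      ring
    rw [hck]
    ring
  have Lt : Tendsto (fun n : ℕ => (tt n : ℝ)/n) atTop (nhds (δ/2)) := by
    have lower : Tendsto (fun n : ℕ => ((dd n : ℝ)/2 - 1)/n) atTop (nhds (δ/2)) := by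
      have hl : Tendsto (fun n : ℕ => ((dd n:ℝ)/n)/2 - 1/n) atTop (nhds (δ/2 - 0)) :=
        (Ld.div_const 2).sub Linv
      rw [sub_zero] at hl
      apply hl.congr
      intro n; ring
    have upper : Tendsto (fun n : ℕ => ((dd n : ℝ)/2)/n) atTop (nhds (δ/2)) := by
      apply (Ld.div_const 2).congr
      intro n; ring
    apply tendsto_of_tendsto_of_tendsto_of_le_of_le' lower upper
    · filter_upwards [E2, E3] with n h2 h3
      have hnpos : (0:ℝ) < (n:ℝ) := by exact_mod_cast h3
      have hnat : dd n ≤ 2 * tt n + 2 := by simp only [htt]; omega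
      have hcst : (dd n : ℝ) ≤ 2 * (tt n : ℝ) + 2 := by exact_mod_cast hnat
      exact (div_le_div_iff_of_pos_right hnpos).mpr (by linarith)
    · filter_upwards [E2, E3] with n h2 h3
      have hnpos : (0:ℝ) < (n:ℝ) := by exact_mod_cast h3
      have hnat : 2 * tt n ≤ dd n := by simp only [htt]; omega
      have hcst : 2 * (tt n : ℝ) ≤ (dd n : ℝ) := by exact_mod_cast hnat
      exact (div_le_div_iff_of_pos_right hnpos).mpr (by linarith)
  have LN : Tendsto (fun n : ℕ => (Nb n : ℝ)/n) atTop (nhds c1) := by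
    apply Tendsto.congr' ?_ ((tendsto_const_nhds.add Lt).add Lk)
    filter_upwards [E3] with n h3
    have hn : (n:ℝ) ≠ 0 := by
      have : (0:ℝ) < (n:ℝ) := by exact_mod_cast h3
      exact ne_of_gt this
    simp only [hNb]
    push_cast
    field_simp
  have LM : Tendsto (fun n : ℕ => (Mb n : ℝ)/n) atTop (nhds c2) := by
    apply Tendsto.congr' ?_ (Lt.add Lk)
    filter_upwards [E3] with n h3
    have hn : (n:ℝ) ≠ 0 := by
      have : (0:ℝ) < (n:ℝ) := by exact_mod_cast h3
      exact ne_of_gt this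
    simp only [hMb]
    push_cast
    field_simp
  have hNbpos : ∀ᶠ n : ℕ in atTop, (0:ℝ) < (Nb n : ℝ) := by
    filter_upwards [E3] with n h3
    have : 0 < Nb n := by simp only [hNb]; omega
    exact_mod_cast this
  have hMbpos : ∀ᶠ n : ℕ in atTop, (0:ℝ) < (Mb n : ℝ) := by
    filter_upwards [E1] with n h1
    have : 0 < Mb n := by simp only [hMb, hkk]; omega
    exact_mod_cast this
  have LkN : Tendsto (fun n : ℕ => (kk n : ℝ)/(Nb n)) atTop (nhds (ρ/c1)) := by
    apply Tendsto.congr' ?_ (Lk.div LN (ne_of_gt hc1pos))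
    filter_upwards [E3, hNbpos] with n h3 hNp
    have hn : (n:ℝ) ≠ 0 := by
      have : (0:ℝ) < (n:ℝ) := by exact_mod_cast h3
      exact ne_of_gt this
    simp only [Pi.div_apply]
    rw [div_div_div_cancel_right₀ hn]
  have LkM : Tendsto (fun n : ℕ => (kk n : ℝ)/(Mb n)) atTop (nhds (ρ/c2)) := by
    apply Tendsto.congr' ?_ (Lk.div LM (ne_of_gt hc2pos))
    filter_upwards [E3, hMbpos] with n h3 hMp
    have hn : (n:ℝ) ≠ 0 := by
      have : (0:ℝ) < (n:ℝ) := by exact_mod_cast h3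
      exact ne_of_gt this
    simp only [Pi.div_apply]
    rw [div_div_div_cancel_right₀ hn]
  have hpc1 : ρ/c1 ≠ 0 := ne_of_gt (div_pos hρ hc1pos)
  have hpc1' : ρ/c1 ≠ 1 := ne_of_lt ((div_lt_one hc1pos).mpr (by rw [hc1]; linarith))
  have hpc2 : ρ/c2 ≠ 0 := ne_of_gt (div_pos hρ hc2pos)
  have hpc2' : ρ/c2 ≠ 1 := ne_of_lt ((div_lt_one hc2pos).mpr (by rw [hc2]; linarith))
  have LB1 : Tendsto (fun n : ℕ => binH ((kk n : ℝ)/(Nb n))) atTop (nhds (binH (ρ/c1))) :=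
    ((binH_continuousAt hpc1 hpc1').tendsto.comp LkN)
  have LB2 : Tendsto (fun n : ℕ => binH ((kk n : ℝ)/(Mb n))) atTop (nhds (binH (ρ/c2))) :=
    ((binH_continuousAt hpc2 hpc2').tendsto.comp LkM)
  have LMinf : Tendsto (fun n : ℕ => (Mb n : ℝ) + 1) atTop atTop := by
    apply tendsto_atTop_mono' atTop ?_ (tendsto_natCast_atTop_atTop.comp Err)
    filter_upwards [E1] with n h1
    have : rr n ≤ Mb n + 1 := by simp only [hMb, hkk]; omega
    have hcst : (rr n : ℝ) ≤ (Mb n : ℝ) + 1 := by exact_mod_cast this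
    exact hcst
  have LM1 : Tendsto (fun n : ℕ => ((Mb n : ℝ)+1)/n) atTop (nhds c2) := by
    have hl := LM.add Linv
    rw [add_zero] at hl
    apply hl.congr
    intro n; ring
  have Llog : Tendsto (fun n : ℕ => Real.logb 2 ((Mb n : ℝ)+1)/n) atTop (nhds 0) := by
    have Llogdiv : Tendsto (fun x : ℝ => Real.log x / x) atTop (nhds 0) :=
      Real.isLittleO_log_id_atTop.tendsto_div_nhds_zero
    have hcomp : Tendsto (fun n : ℕ => Real.log ((Mb n:ℝ)+1)/((Mb n:ℝ)+1)) atTop (nhds 0) :=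
      Llogdiv.comp LMinf
    have hl := (hcomp.mul LM1).mul_const (1/Real.log 2)
    rw [zero_mul, zero_mul] at hl
    apply Tendsto.congr' ?_ hl
    filter_upwards [E3] with n h3
    have hM1 : ((Mb n:ℝ)+1) ≠ 0 := by positivity
    have hL2 : Real.log 2 ≠ 0 := ne_of_gt (Real.log_pos one_lt_two)
    have hn' : (n:ℝ) ≠ 0 := by
      have : (0:ℝ) < (n:ℝ) := by exact_mod_cast h3
      exact ne_of_gt this
    rw [Real.logb]
    field_simp
  have Lh : Tendsto h atTop (nhds (c1 * binH (ρ/c1) - c2 * binH (ρ/c2))) := by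
    have hl := ((LN.mul LB1).sub (LM.mul LB2)).add Llog
    rw [add_zero] at hl
    exact hl
  -- Step 3 : conclude
  have hf0 : ∀ᶠ n : ℕ in atTop, (0:ℝ) ≤ f n := by
    filter_upwards [E1, E3] with n h1 h3
    have hA1 : 1 ≤ simplexCodeMax n (rr n) (dd n) := one_le_simplexCodeMax (by omega)
    have hA1' : (1:ℝ) ≤ (simplexCodeMax n (rr n) (dd n) : ℝ) := by exact_mod_cast hA1
    have hnn : (0:ℝ) ≤ (n:ℝ) := by positivity
    exact div_nonneg (Real.logb_nonneg one_lt_two hA1') hnn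
  have hcob : Filter.IsCoboundedUnder (· ≤ ·) atTop f :=
    Filter.isCoboundedUnder_le_of_eventually_le atTop hf0
  have hbdd : Filter.IsBoundedUnder (· ≤ ·) atTop h := Lh.isBoundedUnder_le
  calc Filter.limsup f atTop ≤ Filter.limsup h atTop := Filter.limsup_le_limsup hfh hcob hbdd
    _ = c1 * binH (ρ/c1) - c2 * binH (ρ/c2) := Lh.limsup_eq
    _ = (1 + δ / 2 + ρ) * binH (ρ / (1 + δ / 2 + ρ)) - (δ / 2 + ρ) * binH (ρ / (δ / 2 + ρ)) := rfl
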